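/- Let A ⊆ B(H) be a subalgebra containing the identity operator I (not assumed commutative or norm-separable). If A is strongly reductive, then for every representation ρ of A on H that lies in the norm-closed unitary orbit of the identity representation of A on H, the algebra ρ(A) is reductive. -/

import Mathlib

open Filter Topology TopologicalSpace

noncomputable section

/-- `P` is an orthogonal projection: self-adjoint and idempotent. -/
def IsOrthoProjOp {H : Type*} [NormedAddCommGroup H] [InnerProductSpace ℂ H] [CompleteSpace H]
    (P : H →L[ℂ] H) : Prop :=
  IsSelfAdjoint P ∧ IsIdempotentElem P

/-- A set of operators is strongly reductive. -/
def StronglyReductiveSet {H : Type*} [NormedAddCommGroup H] [InnerProductSpace ℂ H]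
    [CompleteSpace H] (A : Set (H →L[ℂ] H)) : Prop :=
  ∀ P : ℕ → (H →L[ℂ] H), (∀ n, IsOrthoProjOp (P n)) →
    (∀ T ∈ A, Tendsto (fun n => ‖(1 - P n) * T * P n‖) atTop (𝓝 0)) →
    ∀ T ∈ A, Tendsto (fun n => ‖T * P n - P n * T‖) atTop (𝓝 0)

/-- The (closed) subspace `M` is invariant under the set of operators `S`. -/
def InvariantUnder {H : Type*} [NormedAddCommGroup H] [InnerProductSpace ℂ H]
    (S : Set (H →L[ℂ] H)) (M : Submodule ℂ H) : Prop :=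
  ∀ T ∈ S, ∀ x ∈ M, T x ∈ M

/-- The subspace `M` reduces the set of operators `S`. -/
def ReducesSet {H : Type*} [NormedAddCommGroup H] [InnerProductSpace ℂ H]
    (S : Set (H →L[ℂ] H)) (M : Submodule ℂ H) : Prop :=
  InvariantUnder S M ∧ InvariantUnder S Mᗮ

/-- A set of operators is reductive: every closed invariant subspace reduces it. -/
def IsReductiveSet {H : Type*} [NormedAddCommGroup H] [InnerProductSpace ℂ H]
    (S : Set (H →L[ℂ] H)) : Prop :=
  ∀ M : Submodule ℂ H, IsClosed (M : Set H) → InvariantUnder S M → ReducesSet S M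

/-- The representation `ρ` of `A` lies in the norm-closed unitary orbit of the identity
representation of `A`. -/
def InUnitaryOrbitOfId {H : Type*} [NormedAddCommGroup H] [InnerProductSpace ℂ H]
    [CompleteSpace H] (A : Subalgebra ℂ (H →L[ℂ] H)) (ρ : A →ₐ[ℂ] (H →L[ℂ] H)) : Prop :=
  ∃ U : ℕ → (H →L[ℂ] H), (∀ n, U n ∈ unitary (H →L[ℂ] H)) ∧
    ∀ T : A, Tendsto (fun n => ‖ρ T - U n * (T : H →L[ℂ] H) * star (U n)‖) atTop (𝓝 0)

theorem stmt5 {H : Type*} [NormedAddCommGroup H] [InnerProductSpace ℂ H] [CompleteSpace H]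
    [SeparableSpace H] (hinf : ¬ FiniteDimensional ℂ H)
    (A : Subalgebra ℂ (H →L[ℂ] H))
    (h : StronglyReductiveSet (A : Set (H →L[ℂ] H))) :
    ∀ ρ : A →ₐ[ℂ] (H →L[ℂ] H), InUnitaryOrbitOfId A ρ →
      IsReductiveSet (Set.range fun T : A => ρ T) := by
  have hnt : Nontrivial H := by
    rcases subsingleton_or_nontrivial H with hs | hn
    · exact absurd (Module.finite_of_rank_eq_zero (rank_subsingleton' ℂ H)) hinf
    · exact hn
  intro ρ hρ M hMclosed hMinv
  haveI : CompleteSpace M := hMclosed.completeSpace_coe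
  obtain ⟨U, hU, hconv⟩ := hρ
  -- the orthogonal projection onto M as an operator on H
  set P : H →L[ℂ] H := M.subtypeL ∘L M.orthogonalProjectionOnto with hPdef
  have hPapp : ∀ x, P x = (M.orthogonalProjectionOnto x : H) := fun x => rfl
  have hPmem : ∀ x, P x ∈ M := fun x => (M.orthogonalProjectionOnto x).2
  have hPfix : ∀ x ∈ M, P x = x := fun x hx => Submodule.starProjection_eq_self_iff.mpr hx
  have hPsa : IsSelfAdjoint P := isSelfAdjoint_starProjection M
  have hPidem : IsIdempotentElem P := by
    apply ContinuousLinearMap.ext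
    intro x
    simp only [ContinuousLinearMap.mul_apply]
    exact hPfix _ (hPmem x)
  have hPzero_of_mem : ∀ x ∈ Mᗮ, P x = 0 := by
    intro x hx
    rw [hPapp, Submodule.orthogonalProjectionOnto_apply_of_mem_orthogonal hx,
      Submodule.coe_zero]
  have hmem_of_Pzero : ∀ x, P x = 0 → x ∈ Mᗮ := by
    intro x hx
    have : x - P x ∈ Mᗮ := Submodule.sub_starProjection_mem_orthogonal (K := M) x
    rw [hx, sub_zero] at this
    exact this
  -- unitary facts
  have hU1 : ∀ n, star (U n) * U n = 1 := fun n => (Unitary.mem_iff.mp (hU n)).1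
  have hU2 : ∀ n, U n * star (U n) = 1 := fun n => (Unitary.mem_iff.mp (hU n)).2
  have hUsU : ∀ n y, U n (star (U n) y) = y := by
    intro n y
    have := congrArg (fun (V : H →L[ℂ] H) => V y) (hU2 n)
    simpa [ContinuousLinearMap.mul_apply] using this
  have hsUU : ∀ n y, star (U n) (U n y) = y := by
    intro n y
    have := congrArg (fun (V : H →L[ℂ] H) => V y) (hU1 n)
    simpa [ContinuousLinearMap.mul_apply] using this
  have hUnorm : ∀ n, ‖U n‖ = 1 := fun n => CStarRing.norm_of_mem_unitary (hU n)
  have hsUnorm : ∀ n, ‖star (U n)‖ = 1 :=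
    fun n => CStarRing.norm_of_mem_unitary (Unitary.star_mem (hU n))
  -- the projections P n
  set Q : ℕ → (H →L[ℂ] H) := fun n => star (U n) * P * U n with hQdef
  have hQop : ∀ n, IsOrthoProjOp (Q n) := by
    intro n
    constructor
    · show star (Q n) = Q n
      simp only [hQdef, star_mul, star_star, hPsa.star_eq, mul_assoc]
    · show Q n * Q n = Q n
      simp only [hQdef, mul_assoc]
      rw [← mul_assoc (U n) (star (U n)), hU2 n, one_mul, ← mul_assoc P P, hPidem]
  -- invariance gives (1 - P) * ρ T * P = 0
  have hinv0 : ∀ T : A, (1 - P) * ρ T * P = 0 := by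
    intro T
    apply ContinuousLinearMap.ext
    intro x
    have hmem : ρ T (P x) ∈ M := hMinv (ρ T) ⟨T, rfl⟩ (P x) (hPmem x)
    simp only [ContinuousLinearMap.mul_apply, ContinuousLinearMap.sub_apply,
      ContinuousLinearMap.one_apply, ContinuousLinearMap.zero_apply]
    rw [hPfix _ hmem, sub_self]
  -- key identity for the asymptotic invariance
  have hid1 : ∀ n (T : A), (1 - Q n) * (T : H →L[ℂ] H) * Q n =
      star (U n) * ((1 - P) * (ρ T - (ρ T - U n * (T : H →L[ℂ] H) * star (U n))) * P) * U n := by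
    intro n T
    apply ContinuousLinearMap.ext
    intro x
    simp only [ContinuousLinearMap.mul_apply, ContinuousLinearMap.sub_apply,
      ContinuousLinearMap.one_apply, hQdef, sub_sub_cancel, hUsU, hsUU, map_sub]
  have hQten : ∀ T ∈ (A : Set (H →L[ℂ] H)),
      Tendsto (fun n => ‖(1 - Q n) * T * Q n‖) atTop (𝓝 0) := by
    rintro T hT
    lift T to A using hT with S
    apply squeeze_zero (fun n => norm_nonneg _)
      (g := fun n => ‖(1 : H →L[ℂ] H) - P‖ * ‖P‖ * ‖ρ S - U n * (S : H →L[ℂ] H) * star (U n)‖)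
    · intro n
      rw [hid1 n S, sub_sub_cancel]
      calc ‖star (U n) * ((1 - P) * (U n * (S : H →L[ℂ] H) * star (U n)) * P) * U n‖
          ≤ ‖star (U n)‖ * ‖(1 - P) * (U n * (S : H →L[ℂ] H) * star (U n)) * P‖ * ‖U n‖ :=
            le_trans (norm_mul_le _ _) (by
              gcongr
              exact norm_mul_le _ _)
        _ = ‖(1 - P) * (U n * (S : H →L[ℂ] H) * star (U n)) * P‖ := by
            rw [hUnorm, hsUnorm, one_mul, mul_one]
        _ = ‖(1 - P) * (U n * (S : H →L[ℂ] H) * star (U n) - ρ S) * P‖ := by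
            congr 1
            have expand : (1 - P) * (U n * (S : H →L[ℂ] H) * star (U n) - ρ S) * P =
                (1 - P) * (U n * (S : H →L[ℂ] H) * star (U n)) * P - (1 - P) * ρ S * P := by
              noncomm_ring
            rw [expand, hinv0 S, sub_zero]
        _ ≤ ‖(1 : H →L[ℂ] H) - P‖ * ‖U n * (S : H →L[ℂ] H) * star (U n) - ρ S‖ * ‖P‖ :=
            le_trans (norm_mul_le _ _) (by gcongr; exact norm_mul_le _ _)
        _ = ‖(1 : H →L[ℂ] H) - P‖ * ‖P‖ * ‖ρ S - U n * (S : H →L[ℂ] H) * star (U n)‖ := by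
            rw [← norm_neg (U n * (S : H →L[ℂ] H) * star (U n) - ρ S), neg_sub]; ring
    · have := (hconv S).const_mul (‖(1 : H →L[ℂ] H) - P‖ * ‖P‖)
      simpa using this
  have hcomm := h Q hQop hQten
  -- deduce that P commutes with ρ S for every S
  have hPcomm : ∀ S : A, ρ S * P = P * ρ S := by
    intro S
    have key : ∀ n, ρ S * P - P * ρ S =
        (ρ S - U n * (S : H →L[ℂ] H) * star (U n)) * P
          - P * (ρ S - U n * (S : H →L[ℂ] H) * star (U n))
          + U n * ((S : H →L[ℂ] H) * Q n - Q n * (S : H →L[ℂ] H)) * star (U n) := by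
      intro n
      apply ContinuousLinearMap.ext
      intro x
      simp only [ContinuousLinearMap.mul_apply, ContinuousLinearMap.sub_apply,
        ContinuousLinearMap.add_apply, hQdef, hUsU, hsUU, map_sub]
      abel
    have hbnd : ∀ n, ‖ρ S * P - P * ρ S‖ ≤
        2 * ‖P‖ * ‖ρ S - U n * (S : H →L[ℂ] H) * star (U n)‖
          + ‖(S : H →L[ℂ] H) * Q n - Q n * (S : H →L[ℂ] H)‖ := by
      intro n
      rw [key n]
      set D := ρ S - U n * (S : H →L[ℂ] H) * star (U n)
      calc ‖D * P - P * D + U n * ((S : H →L[ℂ] H) * Q n - Q n * (S : H →L[ℂ] H)) * star (U n)‖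
          ≤ ‖D * P - P * D‖ + ‖U n * ((S : H →L[ℂ] H) * Q n - Q n * (S : H →L[ℂ] H)) * star (U n)‖ :=
            norm_add_le _ _
        _ ≤ (‖D * P‖ + ‖P * D‖) +
            ‖U n‖ * ‖(S : H →L[ℂ] H) * Q n - Q n * (S : H →L[ℂ] H)‖ * ‖star (U n)‖ := by
            gcongr
            · exact norm_sub_le _ _
            · exact le_trans (norm_mul_le _ _) (by gcongr; exact norm_mul_le _ _)
        _ ≤ (‖D‖ * ‖P‖ + ‖P‖ * ‖D‖) +
            ‖U n‖ * ‖(S : H →L[ℂ] H) * Q n - Q n * (S : H →L[ℂ] H)‖ * ‖star (U n)‖ := by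
            gcongr
            · exact norm_mul_le _ _
            · exact norm_mul_le _ _
        _ = 2 * ‖P‖ * ‖D‖ + ‖(S : H →L[ℂ] H) * Q n - Q n * (S : H →L[ℂ] H)‖ := by
            rw [hUnorm, hsUnorm, one_mul, mul_one]; ring
    have hlim : Tendsto (fun n => 2 * ‖P‖ * ‖ρ S - U n * (S : H →L[ℂ] H) * star (U n)‖
        + ‖(S : H →L[ℂ] H) * Q n - Q n * (S : H →L[ℂ] H)‖) atTop (𝓝 0) := by
      have h1 := (hconv S).const_mul (2 * ‖P‖)
      have h2 := hcomm (S : H →L[ℂ] H) S.2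
      simpa using h1.add h2
    have hle : ‖ρ S * P - P * ρ S‖ ≤ 0 := ge_of_tendsto' hlim hbnd
    have hz : ρ S * P - P * ρ S = 0 := by
      rw [← norm_le_zero_iff]
      exact hle
    exact sub_eq_zero.mp hz
  refine ⟨hMinv, ?_⟩
  rintro T ⟨S, rfl⟩ x hx
  apply hmem_of_Pzero
  have happ : ρ S (P x) = P (ρ S x) := by
    have := congrArg (fun (V : H →L[ℂ] H) => V x) (hPcomm S)
    simpa [ContinuousLinearMap.mul_apply] using this
  rw [← happ, hPzero_of_mem x hx, map_zero]
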